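/- Let Σ(P,σ) = {α ∈ Σ(P) : σα ∈ Σ(P)} and let Z_q ∈ 𝔞_q^reg satisfy α(Z_q) > 0 for all α ∈ Σ(P,σθ). Put Σ(P,σ,+) = {α ∈ Σ(P,σ) : α(Z_q) > 0} and 𝔫_{P,σ,+} = ⊕_{α ∈ Σ(P,σ,+)} 𝔤_α, and let 𝔫_{P,σ} = ⊕_{α ∈ Σ(P,σ)} 𝔤_α. Then: (a) 𝔫_{P,σ,+} is a subalgebra of 𝔫_{P,σ}; and (c) 𝔫_{P,σ} = 𝔫_{P,σ,+} ⊕ (𝔫_P ∩ 𝔥). -/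

import Mathlib

/-- Setting: `L = 𝔤` a real Lie algebra with restricted-root-space
decomposition `g α` over the roots `Rt = Σ(𝔤,𝔞)` of `𝔞 = A`; `σA`, `σL` the compatible linear
involutions of `𝔞` and `𝔤` (`σ` acts on roots by `α ↦ α ∘ σA`); `𝔥 = {x : σL x = x}`;
`P = Σ(P)` a positive system; `Z_q ∈ 𝔞_q` regular with `α(Z_q) > 0` for all
`α ∈ Σ(P,σθ) = {α ∈ P : -σα ∈ P}`.  Put `Σ(P,σ) = {α ∈ P : σα ∈ P}` and
`Σ(P,σ,+) = {α ∈ Σ(P,σ) : α(Z_q) > 0}`, with root-space sums `𝔫_{P,σ}`, `𝔫_{P,σ,+}` and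
`𝔫_P = ⊕_{α ∈ P} g α`.  Then: (a) `𝔫_{P,σ,+}` is a subalgebra of `𝔫_{P,σ}`, and
(c) `𝔫_{P,σ} = 𝔫_{P,σ,+} ⊕ (𝔫_P ∩ 𝔥)`. -/
theorem stmt_14 {L A : Type*} [LieRing L] [LieAlgebra ℝ L]
    [AddCommGroup A] [Module ℝ A]
    (Rt : Finset (A →ₗ[ℝ] ℝ))
    (g : (A →ₗ[ℝ] ℝ) → Submodule ℝ L)
    (hbracket : ∀ α β : A →ₗ[ℝ] ℝ, ∀ x ∈ g α, ∀ y ∈ g β, ⁅x, y⁆ ∈ g (α + β))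
    (hbot : ∀ γ : A →ₗ[ℝ] ℝ, γ ∉ (Rt : Set (A →ₗ[ℝ] ℝ)) → γ ≠ 0 → g γ = ⊥)
    (hind : iSupIndep g)
    (σA : A ≃ₗ[ℝ] A) (hσAinv : ∀ a, σA (σA a) = a)
    (σL : L ≃ₗ[ℝ] L) (hσLinv : ∀ x, σL (σL x) = x)
    (hσbr : ∀ x y : L, σL ⁅x, y⁆ = ⁅σL x, σL y⁆)
    (hσRt : ∀ α ∈ Rt, (α.comp (σA : A →ₗ[ℝ] A)) ∈ Rt)
    (hσg : ∀ α : A →ₗ[ℝ] ℝ,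
      Submodule.map (σL : L →ₗ[ℝ] L) (g α) = g (α.comp (σA : A →ₗ[ℝ] A)))
    (P : Finset (A →ₗ[ℝ] ℝ)) (hP : P ⊆ Rt)
    (hxor : ∀ α ∈ Rt, Xor' (α ∈ P) (-α ∈ P))
    (hPadd : ∀ α ∈ P, ∀ β ∈ P, α + β ∈ Rt → α + β ∈ P)
    (Zq : A) (hZq : σA Zq = -Zq)
    (hreg : ∀ α ∈ Rt, α Zq = 0 → ∀ X : A, σA X = -X → α X = 0)
    (hfix : ∀ α ∈ Rt, (∀ X : A, σA X = -X → α X = 0) → ∀ x ∈ g α, σL x = x)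
    (hZpos : ∀ α ∈ P, -(α.comp (σA : A →ₗ[ℝ] A)) ∈ P → 0 < α Zq) :
    (∀ x ∈ (⨆ α ∈ {α : A →ₗ[ℝ] ℝ | α ∈ P ∧ α.comp (σA : A →ₗ[ℝ] A) ∈ P ∧ 0 < α Zq}, g α),
     ∀ y ∈ (⨆ α ∈ {α : A →ₗ[ℝ] ℝ | α ∈ P ∧ α.comp (σA : A →ₗ[ℝ] A) ∈ P ∧ 0 < α Zq}, g α),
      ⁅x, y⁆ ∈ (⨆ α ∈ {α : A →ₗ[ℝ] ℝ | α ∈ P ∧ α.comp (σA : A →ₗ[ℝ] A) ∈ P ∧ 0 < α Zq}, g α)) ∧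
    (⨆ α ∈ {α : A →ₗ[ℝ] ℝ | α ∈ P ∧ α.comp (σA : A →ₗ[ℝ] A) ∈ P}, g α)
      = (⨆ α ∈ {α : A →ₗ[ℝ] ℝ | α ∈ P ∧ α.comp (σA : A →ₗ[ℝ] A) ∈ P ∧ 0 < α Zq}, g α)
        ⊔ ((⨆ α ∈ (P : Set (A →ₗ[ℝ] ℝ)), g α)
            ⊓ LinearMap.ker ((σL : L →ₗ[ℝ] L) - LinearMap.id)) ∧
    (⨆ α ∈ {α : A →ₗ[ℝ] ℝ | α ∈ P ∧ α.comp (σA : A →ₗ[ℝ] A) ∈ P ∧ 0 < α Zq}, g α)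
      ⊓ ((⨆ α ∈ (P : Set (A →ₗ[ℝ] ℝ)), g α)
          ⊓ LinearMap.ker ((σL : L →ₗ[ℝ] L) - LinearMap.id)) = ⊥ := by
  classical
  -- notation
  set σ' : (A →ₗ[ℝ] ℝ) → (A →ₗ[ℝ] ℝ) := fun α => α.comp (σA : A →ₗ[ℝ] A) with hσ'def
  have hσ'inv : ∀ α, σ' (σ' α) = α := by
    intro α; ext a; simp [σ', hσAinv a]
  have hmapg : ∀ α, ∀ x ∈ g α, σL x ∈ g (σ' α) := by
    intro α x hx
    rw [← hσg α]
    exact ⟨x, hx, rfl⟩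
  -- the finset versions of the index sets
  set sp : Finset (A →ₗ[ℝ] ℝ) := P.filter (fun α => σ' α ∈ P ∧ 0 < α Zq) with hspdef
  set ss : Finset (A →ₗ[ℝ] ℝ) := P.filter (fun α => σ' α ∈ P) with hssdef
  have hmem_sp : ∀ α, α ∈ sp ↔ (α ∈ P ∧ σ' α ∈ P ∧ 0 < α Zq) := by
    intro α; simp [sp, Finset.mem_filter, and_assoc]
  have hmem_ss : ∀ α, α ∈ ss ↔ (α ∈ P ∧ σ' α ∈ P) := by
    intro α; simp [ss, Finset.mem_filter]
  have e1 : (⨆ α ∈ {α : A →ₗ[ℝ] ℝ | α ∈ P ∧ α.comp (σA : A →ₗ[ℝ] A) ∈ P ∧ 0 < α Zq}, g α)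
      = ⨆ α ∈ sp, g α := by
    apply le_antisymm
    · exact iSup₂_le fun α hα => le_biSup _ ((hmem_sp α).mpr hα)
    · exact iSup₂_le fun α hα => le_biSup _ ((hmem_sp α).mp hα)
  have e2 : (⨆ α ∈ {α : A →ₗ[ℝ] ℝ | α ∈ P ∧ α.comp (σA : A →ₗ[ℝ] A) ∈ P}, g α)
      = ⨆ α ∈ ss, g α := by
    apply le_antisymm
    · exact iSup₂_le fun α hα => le_biSup _ ((hmem_ss α).mpr hα)
    · exact iSup₂_le fun α hα => le_biSup _ ((hmem_ss α).mp hα)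
  have e3 : (⨆ α ∈ (P : Set (A →ₗ[ℝ] ℝ)), g α) = ⨆ α ∈ P, g α := by
    apply le_antisymm
    · exact iSup₂_le fun α hα => le_biSup _ hα
    · exact iSup₂_le fun α hα => le_biSup _ hα
  have hker : ∀ x : L, x ∈ LinearMap.ker ((σL : L →ₗ[ℝ] L) - LinearMap.id) ↔ σL x = x := by
    intro x
    rw [LinearMap.mem_ker, LinearMap.sub_apply, LinearMap.id_coe, id_eq, sub_eq_zero]
    rfl
  -- uniqueness of components from independence
  have hU : ∀ (s : Finset (A →ₗ[ℝ] ℝ)) (μ : (A →ₗ[ℝ] ℝ) → L),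
      (∀ i ∈ s, μ i ∈ g i) → (∑ i ∈ s, μ i = 0) → ∀ i ∈ s, μ i = 0 := by
    intro s μ hmem hsum i hi
    have h1 : μ i = -∑ j ∈ s.erase i, μ j := by
      have h := Finset.add_sum_erase s μ hi
      rw [hsum] at h
      exact eq_neg_of_add_eq_zero_left h
    have h2 : μ i ∈ (⨆ (j) (_ : j ≠ i), g j) := by
      rw [h1]
      refine neg_mem (Submodule.sum_mem _ fun j hj => ?_)
      exact Submodule.mem_iSup_of_mem j (Submodule.mem_iSup_of_mem
        (Finset.ne_of_mem_erase hj) (hmem j (Finset.mem_of_mem_erase hj)))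
    have hd := (iSupIndep_def.mp hind) i
    have : μ i ∈ (⊥ : Submodule ℝ L) :=
      hd.le_bot (Submodule.mem_inf.mpr ⟨hmem i hi, h2⟩)
    simpa using this
  -- representation of elements of a finite sup
  have hrep : ∀ (s : Finset (A →ₗ[ℝ] ℝ)) (x : L), x ∈ (⨆ α ∈ s, g α) →
      ∃ μ : (A →ₗ[ℝ] ℝ) → L, (∀ α, μ α ∈ g α) ∧ (∀ α, α ∉ s → μ α = 0) ∧
        ∑ α ∈ s, μ α = x := by
    intro s x hx
    obtain ⟨μ, hμ⟩ := (Submodule.mem_iSup_finset_iff_exists_sum (s := s) g x).mp hx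
    refine ⟨fun α => if α ∈ s then (μ α : L) else 0, fun α => ?_, fun α hα => if_neg hα, ?_⟩
    · by_cases h : α ∈ s
      · simpa [h] using (μ α).2
      · simp [h]
    · rw [← hμ]
      exact Finset.sum_congr rfl fun α hα => if_pos hα
  -- key decomposition lemma for σL-fixed elements
  have G : ∀ (s : Finset (A →ₗ[ℝ] ℝ)) (x : L), x ∈ (⨆ α ∈ s, g α) → σL x = x →
      ∃ μ : (A →ₗ[ℝ] ℝ) → L, (∀ α, μ α ∈ g α) ∧ (∀ α, α ∉ s → μ α = 0) ∧
        (∀ α ∈ s, σ' α ∉ s → μ α = 0) ∧ ∑ α ∈ s, μ α = x := by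
    intro s x hx hfx
    obtain ⟨μ, hμg, hμ0, hμsum⟩ := hrep s x hx
    set τ : (A →ₗ[ℝ] ℝ) → L := fun γ => σL (μ (σ' γ)) with hτdef
    have hτg : ∀ γ, τ γ ∈ g γ := by
      intro γ
      have := hmapg (σ' γ) (μ (σ' γ)) (hμg (σ' γ))
      rwa [hσ'inv γ] at this
    have hσ'inj : Function.Injective σ' := by
      intro a b h
      have := congrArg σ' h
      rwa [hσ'inv, hσ'inv] at this
    set u : Finset (A →ₗ[ℝ] ℝ) := s ∪ s.image σ' with hudef
    have hsum1 : ∑ γ ∈ u, μ γ = x := by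
      rw [← hμsum]
      exact (Finset.sum_subset Finset.subset_union_left
        (fun γ _ hγ => hμ0 γ hγ)).symm
    have hsum2 : ∑ γ ∈ u, τ γ = x := by
      have h1 : ∑ γ ∈ u, τ γ = ∑ γ ∈ s.image σ', τ γ := by
        refine (Finset.sum_subset Finset.subset_union_right (fun γ _ hγ => ?_)).symm
        have hσγ : σ' γ ∉ s := by
          intro h
          exact hγ (Finset.mem_image.mpr ⟨σ' γ, h, hσ'inv γ⟩)
        simp [τ, hμ0 _ hσγ]
      have h2 : ∑ γ ∈ s.image σ', τ γ = ∑ α ∈ s, τ (σ' α) :=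
        Finset.sum_image (fun a _ b _ h => hσ'inj h)
      have h3 : ∑ α ∈ s, τ (σ' α) = σL (∑ α ∈ s, μ α) := by
        rw [map_sum]
        exact Finset.sum_congr rfl fun α _ => by rw [hτdef]; simp [hσ'inv α]
      rw [h1, h2, h3, hμsum, hfx]
    have hzero : ∀ γ ∈ u, μ γ - τ γ = 0 := by
      refine hU u (fun γ => μ γ - τ γ) (fun γ _ => sub_mem (hμg γ) (hτg γ)) ?_
      rw [Finset.sum_sub_distrib, hsum1, hsum2, sub_self]
    refine ⟨μ, hμg, hμ0, fun α hα hσα => ?_, hμsum⟩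
    have h := hzero α (Finset.mem_union_left _ hα)
    have hτ0 : τ α = 0 := by simp [τ, hμ0 _ hσα]
    rw [hτ0, sub_zero] at h
    exact h
  -- σ' flips the sign of the value at Zq
  have hflip : ∀ α : A →ₗ[ℝ] ℝ, (σ' α) Zq = -(α Zq) := by
    intro α
    show α (σA Zq) = -(α Zq)
    rw [hZq, map_neg]
  rw [e1, e2, e3]
  refine ⟨?_, ?_, ?_⟩
  · -- part (a): subalgebra
    have key : ∀ α ∈ sp, ∀ β ∈ sp, ∀ x ∈ g α, ∀ y ∈ g β, ⁅x, y⁆ ∈ ⨆ γ ∈ sp, g γ := by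
      intro α hα β hβ x hx y hy
      obtain ⟨hαP, hσα, hαZ⟩ := (hmem_sp α).mp hα
      obtain ⟨hβP, hσβ, hβZ⟩ := (hmem_sp β).mp hβ
      have hxy := hbracket α β x hx y hy
      by_cases hrt : α + β ∈ Rt
      · have hPab : α + β ∈ P := hPadd α hαP β hβP hrt
        have hσab : σ' (α + β) = σ' α + σ' β := by
          ext a; simp [σ']
        have hσrt : σ' (α + β) ∈ Rt := hσRt _ hrt
        rw [hσab] at hσrt
        have hσP : σ' (α + β) ∈ P := by
          rw [hσab]
          exact hPadd _ hσα _ hσβ hσrt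
        have hmem : α + β ∈ sp := (hmem_sp _).mpr
          ⟨hPab, hσP, by simpa using add_pos hαZ hβZ⟩
        exact Submodule.mem_iSup_of_mem (α + β) (Submodule.mem_iSup_of_mem hmem hxy)
      · have hne : α + β ≠ 0 := by
          intro h
          have hβeq : β = -α := by
            rw [← neg_eq_of_add_eq_zero_right h]
          have hx2 := hxor β (hP hβP)
          rw [hβeq] at hx2
          simp only [neg_neg] at hx2
          unfold Xor' at hx2
          rcases hx2 with ⟨-, h2⟩ | ⟨-, h2⟩
          · exact h2 hαP
          · exact h2 (hβeq ▸ hβP)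
        rw [hbot _ hrt hne] at hxy
        simp only [Submodule.mem_bot] at hxy
        rw [hxy]
        exact zero_mem _
    have sum_lie' : ∀ (s : Finset (A →ₗ[ℝ] ℝ)) (f : (A →ₗ[ℝ] ℝ) → L) (y : L),
        ⁅∑ i ∈ s, f i, y⁆ = ∑ i ∈ s, ⁅f i, y⁆ := by
      intro s f y
      induction s using Finset.induction_on with
      | empty => simp
      | insert _ _ h ih => rw [Finset.sum_insert h, Finset.sum_insert h, add_lie, ih]
    have lie_sum' : ∀ (s : Finset (A →ₗ[ℝ] ℝ)) (f : (A →ₗ[ℝ] ℝ) → L) (y : L),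
        ⁅y, ∑ i ∈ s, f i⁆ = ∑ i ∈ s, ⁅y, f i⁆ := by
      intro s f y
      induction s using Finset.induction_on with
      | empty => simp
      | insert _ _ h ih => rw [Finset.sum_insert h, Finset.sum_insert h, lie_add, ih]
    intro x hx y hy
    obtain ⟨μ, hμg, hμ0, hμsum⟩ := hrep sp x hx
    obtain ⟨ν, hνg, hν0, hνsum⟩ := hrep sp y hy
    rw [← hμsum, ← hνsum, sum_lie']
    refine Submodule.sum_mem _ fun α hα => ?_
    rw [lie_sum']
    exact Submodule.sum_mem _ fun β hβ =>
      key α hα β hβ (μ α) (hμg α) (ν β) (hνg β)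
  · -- part (c): equality
    apply le_antisymm
    · refine iSup₂_le fun α hα => ?_
      obtain ⟨hαP, hσα⟩ := (hmem_ss α).mp hα
      rcases lt_trichotomy (α Zq) 0 with hneg | hzero | hpos
      · -- α Zq < 0 : x = (x + σx) - σx
        intro x hx
        have hσαsp : σ' α ∈ sp := (hmem_sp (σ' α)).mpr
          ⟨hσα, by rw [hσ'inv]; exact hαP, by rw [hflip]; linarith⟩
        have hσx : σL x ∈ g (σ' α) := hmapg α x hx
        have h1 : -(σL x) ∈ (⨆ γ ∈ sp, g γ) ⊔
            ((⨆ γ ∈ P, g γ) ⊓ LinearMap.ker ((σL : L →ₗ[ℝ] L) - LinearMap.id)) :=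
          Submodule.mem_sup_left
            (neg_mem (Submodule.mem_iSup_of_mem (σ' α)
              (Submodule.mem_iSup_of_mem hσαsp hσx)))
        have h2 : x + σL x ∈ (⨆ γ ∈ sp, g γ) ⊔
            ((⨆ γ ∈ P, g γ) ⊓ LinearMap.ker ((σL : L →ₗ[ℝ] L) - LinearMap.id)) := by
          refine Submodule.mem_sup_right (Submodule.mem_inf.mpr ⟨?_, ?_⟩)
          · exact add_mem
              (Submodule.mem_iSup_of_mem α (Submodule.mem_iSup_of_mem hαP hx))
              (Submodule.mem_iSup_of_mem (σ' α)
                (Submodule.mem_iSup_of_mem hσα hσx))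
          · rw [hker]
            rw [map_add, hσLinv x, add_comm]
        have : x = (x + σL x) + (-(σL x)) := by abel
        rw [this]
        exact add_mem h2 h1
      · -- α Zq = 0 : g α ⊆ 𝔫_P ∩ 𝔥
        intro x hx
        have hαRt : α ∈ Rt := hP hαP
        have hvan : ∀ X : A, σA X = -X → α X = 0 := hreg α hαRt hzero
        have hfixed : σL x = x := hfix α hαRt hvan x hx
        refine Submodule.mem_sup_right (Submodule.mem_inf.mpr ⟨?_, ?_⟩)
        · exact Submodule.mem_iSup_of_mem α (Submodule.mem_iSup_of_mem hαP hx)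
        · rw [hker]; exact hfixed
      · -- α Zq > 0 : g α ⊆ 𝔫_{P,σ,+}
        have : α ∈ sp := (hmem_sp α).mpr ⟨hαP, hσα, hpos⟩
        exact (le_biSup _ this).trans le_sup_left
    · refine sup_le ?_ ?_
      · exact iSup₂_le fun α hα => le_biSup _ ((hmem_ss α).mpr
          ⟨((hmem_sp α).mp hα).1, ((hmem_sp α).mp hα).2.1⟩)
      · rintro x hx
        rw [Submodule.mem_inf] at hx
        obtain ⟨hxP, hxH⟩ := hx
        obtain ⟨μ, hμg, hμ0, hμσ, hμsum⟩ := G P x hxP ((hker x).mp hxH)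
        have hxss : x = ∑ α ∈ ss, μ α := by
          rw [← hμsum]
          exact (Finset.sum_subset (Finset.filter_subset _ _)
            (fun α hα hαss => hμσ α hα (fun h => hαss ((hmem_ss α).mpr ⟨hα, h⟩)))).symm
        rw [hxss]
        exact Submodule.sum_mem _ fun α hα =>
          Submodule.mem_iSup_of_mem α (Submodule.mem_iSup_of_mem hα (hμg α))
  · -- part (c): disjointness
    rw [eq_bot_iff]
    rintro x hx
    rw [Submodule.mem_inf] at hx
    obtain ⟨hxp, hxPH⟩ := hx
    rw [Submodule.mem_inf] at hxPH
    obtain ⟨μ, hμg, hμ0, hμσ, hμsum⟩ := G sp x hxp ((hker x).mp hxPH.2)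
    have hall : ∀ α ∈ sp, μ α = 0 := by
      intro α hα
      refine hμσ α hα ?_
      intro hσαsp
      have h1 := ((hmem_sp α).mp hα).2.2
      have h2 := ((hmem_sp (σ' α)).mp hσαsp).2.2
      rw [hflip] at h2
      linarith
    have : x = 0 := by
      rw [← hμsum]
      exact Finset.sum_eq_zero hall
    simp [this]
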